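/- arXiv:1403.3081 — 3 statements merged into one kernel-verified Lean document; each statement's English description precedes it below -/
import Mathlib

section
/- For all i ≥ 3, R_i ≡ 3 (mod 4), where R_i is the odd integer defined by 5^(2^(i-2)) = 1 + R_i·2^i. -/
/-- `R i` is the odd integer with `5 ^ (2 ^ (i - 2)) = 1 + R i * 2 ^ i`. -/
noncomputable def R (i : ℕ) : ℤ := ((5 : ℤ) ^ (2 ^ (i - 2)) - 1) / 2 ^ i

lemma key : ∀ i : ℕ, 3 ≤ i → ∃ r : ℤ, (5 : ℤ) ^ (2 ^ (i - 2)) = 1 + r * 2 ^ i ∧ r % 4 = 3 := by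
  intro i hi
  induction i with
  | zero => omega
  | succ n ih =>
    rcases Nat.lt_or_ge n 3 with h | h
    · interval_cases n
      · omega
      · omega
      · exact ⟨3, by norm_num⟩
    · obtain ⟨r, hr, hr4⟩ := ih (by omega)
      refine ⟨r * (1 + r * 2 ^ (n - 1)), ?_, ?_⟩
      · have h2 : n + 1 - 2 = (n - 2) + 1 := by omega
        rw [h2, pow_succ, pow_mul, hr]
        have h3 : (2:ℤ) ^ (n * 2) = 2 ^ n * 2 ^ (n - 1) * 2 := by
          rw [mul_assoc, ← pow_succ, ← pow_add]; congr 1; omega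
        ring_nf
        rw [h3]
        ring
      · have h4 : (4 : ℤ) ∣ 2 ^ (n - 1) := by
          have : n - 1 = (n - 3) + 2 := by omega
          exact ⟨2 ^ (n - 3), by rw [this, pow_add]; ring⟩
        obtain ⟨k, hk⟩ := h4
        have : r * (1 + r * (2:ℤ) ^ (n - 1)) = r + 4 * (r * r * k) := by rw [hk]; ring
        omega

theorem stmt_3 (i : ℕ) (hi : 3 ≤ i) : R i ≡ 3 [ZMOD 4] := by
  obtain ⟨r, hr, hr4⟩ := key i hi
  have hR : R i = r := by
    unfold R
    rw [hr]
    simp [Int.add_mul_ediv_right]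
  rw [hR]
  show r % 4 = 3 % 4
  omega
end

section
/- Let m ≥ 3, n > 0 with t + 2 ≤ m − n, A = 2^n·A₁ (A₁ odd), B odd, k = 2^t·k₁ (k₁ odd), and suppose n + 2(t+2) ≥ m. Then for every integer γ, A·5^(γk) + B ≡ (A + B)·5^(γ·A·k·(A+B)^{-1}·R_{t+2}·R_{t+n+2}^{-1}) (mod 2^m), where R_i is defined by 5^(2^(i-2)) = 1 + R_i·2^i and inverses are taken mod 2^m. -/
private lemma R_spec (j : ℕ) : (5 : ℤ) ^ (2 ^ j) = 1 + R (j + 2) * 2 ^ (j + 2) := by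
  obtain ⟨r, h⟩ : ∃ r : ℤ, (5 : ℤ) ^ (2 ^ j) = 1 + r * 2 ^ (j + 2) := by
    induction j with
    | zero => exact ⟨1, by norm_num⟩
    | succ j ih =>
      obtain ⟨r, h⟩ := ih
      refine ⟨r + r ^ 2 * 2 ^ (j + 1), ?_⟩
      have h2 : (5 : ℤ) ^ 2 ^ (j + 1) = ((5 : ℤ) ^ 2 ^ j) ^ 2 := by
        rw [← pow_mul, pow_succ]
      rw [h2, h]; ring
  have hR : R (j + 2) = r := by
    unfold R
    simp only [Nat.add_sub_cancel]
    rw [h, add_sub_cancel_left]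
    exact Int.mul_ediv_cancel r (by positivity)
  rw [hR, h]

private lemma binom_trunc (x : ℤ) (c : ℕ) : x ^ 2 ∣ (1 + x) ^ c - (1 + c * x) := by
  induction c with
  | zero => simp
  | succ c ih =>
    have h : (1 + x) ^ (c + 1) - (1 + ((c : ℤ) + 1) * x)
        = (1 + x) * ((1 + x) ^ c - (1 + c * x)) + c * x ^ 2 := by ring
    push_cast
    rw [h]
    exact dvd_add (ih.mul_left _) ⟨(c : ℤ), by ring⟩

private lemma pow_congr_aux {a M : ℤ} {o d e : ℕ} (h : a ^ o ≡ 1 [ZMOD M])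
    (hde : d ≡ e [MOD o]) (hle : d ≤ e) : a ^ d ≡ a ^ e [ZMOD M] := by
  obtain ⟨q, hq⟩ := (Nat.modEq_iff_dvd' hle).mp hde
  have he : e = d + o * q := by omega
  subst he
  calc a ^ d = a ^ d * 1 ^ q := by ring
    _ ≡ a ^ d * (a ^ o) ^ q [ZMOD M] := Int.ModEq.mul_left _ (h.symm.pow q)
    _ = a ^ (d + o * q) := by rw [pow_add, pow_mul]

private lemma pow_congr {a M : ℤ} {o d e : ℕ} (h : a ^ o ≡ 1 [ZMOD M])
    (hde : d ≡ e [MOD o]) : a ^ d ≡ a ^ e [ZMOD M] := by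
  rcases le_total d e with hle | hle
  · exact pow_congr_aux h hde hle
  · exact (pow_congr_aux h hde.symm hle).symm

theorem stmt_11 (m n t : ℕ) (hm : 3 ≤ m) (hn : 0 < n)
    (A A₁ B : ℤ) (k k₁ : ℕ)
    (hA : A = 2 ^ n * A₁) (hA₁ : Odd A₁) (hB : Odd B)
    (hk : k = 2 ^ t * k₁) (hk₁ : Odd k₁)
    (hrange₁ : t + 2 ≤ m - n) (hrange₂ : m ≤ n + 2 * (t + 2)) :
    ∀ γ : ℕ, ∀ u v : ℤ,
      u * (A + B) ≡ 1 [ZMOD 2 ^ m] →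
      v * R (t + n + 2) ≡ 1 [ZMOD 2 ^ m] →
      ∀ e : ℕ, (e : ℤ) ≡ (γ : ℤ) * A * k * u * R (t + 2) * v [ZMOD 2 ^ (m - 2)] →
      A * 5 ^ (γ * k) + B ≡ (A + B) * 5 ^ e [ZMOD 2 ^ m] := by
  intro γ u v hu hv e he
  have hnm : n + t + 2 ≤ m := by omega
  obtain ⟨s, hs⟩ : ∃ s, m = t + n + 2 + s := ⟨m - (t + n + 2), by omega⟩
  have hst : s ≤ t + 2 := by omega
  set Rt := R (t + 2) with hRt
  set Rn := R (t + n + 2) with hRn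
  have hxdef : (5 : ℤ) ^ (2 ^ t) = 1 + Rt * 2 ^ (t + 2) := R_spec t
  have hydef : (5 : ℤ) ^ (2 ^ (t + n)) = 1 + Rn * 2 ^ (t + n + 2) := R_spec (t + n)
  -- Step L : left-hand side
  have hL : A * 5 ^ (γ * k) + B ≡
      (A + B) + (γ : ℤ) * k₁ * A₁ * Rt * 2 ^ (t + n + 2) [ZMOD (2 : ℤ) ^ m] := by
    have hek : γ * k = 2 ^ t * (γ * k₁) := by rw [hk]; ring
    rw [hek, pow_mul, hxdef]
    obtain ⟨w, hw⟩ := binom_trunc (Rt * 2 ^ (t + 2)) (γ * k₁)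
    have hdv : (2 : ℤ) ^ m ∣ (2 : ℤ) ^ (n + 2 * t + 4) := pow_dvd_pow 2 (by omega)
    refine Int.ModEq.symm (Int.modEq_iff_dvd.mpr (hdv.trans ⟨A₁ * Rt ^ 2 * w, ?_⟩))
    subst hA
    push_cast at hw ⊢
    linear_combination ((2 : ℤ) ^ n * A₁) * hw
  -- 5 ^ (2^(m-2)) ≡ 1
  have horder : (5 : ℤ) ^ 2 ^ (m - 2) ≡ 1 [ZMOD (2 : ℤ) ^ m] := by
    have h := R_spec (m - 2)
    rw [Nat.sub_add_cancel (by omega)] at h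
    exact (Int.modEq_iff_dvd.mpr ⟨R m, by rw [h]; ring⟩).symm
  -- the integer target exponent
  set E : ℤ := (γ : ℤ) * A * k * u * R (t + 2) * v with hE
  set E' : ℤ := (γ : ℤ) * A₁ * k₁ * u * Rt * v with hE'
  have hEE' : E = 2 ^ (t + n) * E' := by
    rw [hE, hE', hA, hk]; push_cast; ring
  set d : ℕ := (E % 2 ^ (m - 2)).toNat with hdd
  have hMpos : (0 : ℤ) < 2 ^ (m - 2) := by positivity
  have hdint : (d : ℤ) = E % 2 ^ (m - 2) :=
    Int.toNat_of_nonneg (Int.emod_nonneg _ (ne_of_gt hMpos))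
  have hdE : (d : ℤ) ≡ E [ZMOD (2 : ℤ) ^ (m - 2)] := by
    rw [hdint]; exact Int.emod_emod_of_dvd _ dvd_rfl
  have hed : (e : ℤ) ≡ (d : ℤ) [ZMOD (2 : ℤ) ^ (m - 2)] := he.trans hdE.symm
  have hedN : e ≡ d [MOD 2 ^ (m - 2)] := by
    rw [← Int.natCast_modEq_iff]; push_cast; exact hed
  have h5ed : (5 : ℤ) ^ e ≡ (5 : ℤ) ^ d [ZMOD (2 : ℤ) ^ m] := pow_congr horder hedN
  -- 2^(t+n) divides d
  have hdvdE : (2 : ℤ) ^ (t + n) ∣ E := ⟨E', hEE'⟩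
  have hdvdd : (2 : ℤ) ^ (t + n) ∣ (d : ℤ) := by
    have h1 : (d : ℤ) ≡ E [ZMOD (2 : ℤ) ^ (t + n)] :=
      hdE.of_dvd (pow_dvd_pow 2 (by omega))
    have h2 : E ≡ 0 [ZMOD (2 : ℤ) ^ (t + n)] := (Int.modEq_zero_iff_dvd).mpr hdvdE
    exact (Int.modEq_zero_iff_dvd).mp (h1.trans h2)
  obtain ⟨c, hc⟩ : ∃ c : ℕ, d = 2 ^ (t + n) * c := by
    have : (2 : ℕ) ^ (t + n) ∣ d := by
      rwa [← Nat.cast_ofNat (n := 2), ← Nat.cast_pow, Int.natCast_dvd_natCast] at hdvdd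
    exact this
  -- c ≡ E' mod 2^s
  have hcE' : (c : ℤ) ≡ E' [ZMOD (2 : ℤ) ^ s] := by
    have h1 : (2 : ℤ) ^ (t + n) * (c : ℤ) ≡ 2 ^ (t + n) * E' [ZMOD (2 : ℤ) ^ (m - 2)] := by
      rw [← hEE']
      have : ((d : ℕ) : ℤ) = 2 ^ (t + n) * (c : ℤ) := by rw [hc]; push_cast; ring
      rw [← this]; exact hdE
    have h2 : (2 : ℤ) ^ (t + n) * (2 : ℤ) ^ s ∣ 2 ^ (t + n) * (E' - (c : ℤ)) := by
      have hm2 : (2 : ℤ) ^ (m - 2) = 2 ^ (t + n) * 2 ^ s := by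
        rw [← pow_add]; congr 1; omega
      have := Int.modEq_iff_dvd.mp h1
      rw [hm2] at this
      convert this using 1; ring
    have h3 : (2 : ℤ) ^ s ∣ E' - (c : ℤ) :=
      (mul_dvd_mul_iff_left (a := (2 : ℤ) ^ (t + n)) (by positivity)).mp h2
    exact Int.modEq_iff_dvd.mpr h3
  -- Step R : right-hand side
  have h5d : (5 : ℤ) ^ d = (1 + Rn * 2 ^ (t + n + 2)) ^ c := by
    rw [hc, pow_mul, hydef]
  have hR : (A + B) * 5 ^ d ≡
      (A + B) + (c : ℤ) * (A + B) * Rn * 2 ^ (t + n + 2) [ZMOD (2 : ℤ) ^ m] := by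
    rw [h5d]
    obtain ⟨w, hw⟩ := binom_trunc (Rn * 2 ^ (t + n + 2)) c
    have hdv : (2 : ℤ) ^ m ∣ (2 : ℤ) ^ (2 * t + 2 * n + 4) := pow_dvd_pow 2 (by omega)
    refine Int.ModEq.symm (Int.modEq_iff_dvd.mpr (hdv.trans ⟨(A + B) * Rn ^ 2 * w, ?_⟩))
    linear_combination ((A + B)) * hw
  -- middle congruence
  have hmid : (A + B) + (c : ℤ) * (A + B) * Rn * 2 ^ (t + n + 2) ≡
      (A + B) + (γ : ℤ) * k₁ * A₁ * Rt * 2 ^ (t + n + 2) [ZMOD (2 : ℤ) ^ m] := by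
    have hkey : (c : ℤ) * ((A + B) * Rn) ≡ (γ : ℤ) * k₁ * A₁ * Rt [ZMOD (2 : ℤ) ^ s] := by
      calc (c : ℤ) * ((A + B) * Rn)
          ≡ E' * ((A + B) * Rn) [ZMOD (2 : ℤ) ^ s] := hcE'.mul_right _
        _ = ((γ : ℤ) * A₁ * k₁ * Rt) * ((u * (A + B)) * (v * Rn)) := by rw [hE']; ring
        _ ≡ ((γ : ℤ) * A₁ * k₁ * Rt) * 1 [ZMOD (2 : ℤ) ^ s] :=
            Int.ModEq.mul_left _ ((hu.mul hv).of_dvd (pow_dvd_pow 2 (by omega)))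
        _ = (γ : ℤ) * k₁ * A₁ * Rt := by ring
    obtain ⟨w2, hw2⟩ := Int.modEq_iff_dvd.mp hkey
    refine Int.modEq_iff_dvd.mpr ⟨w2, ?_⟩
    have hms : (2 : ℤ) ^ m = 2 ^ s * 2 ^ (t + n + 2) := by rw [← pow_add]; congr 1; omega
    rw [hms]
    linear_combination (2 : ℤ) ^ (t + n + 2) * hw2
  calc A * 5 ^ (γ * k) + B
      ≡ (A + B) + (γ : ℤ) * k₁ * A₁ * Rt * 2 ^ (t + n + 2) [ZMOD (2 : ℤ) ^ m] := hL
    _ ≡ (A + B) + (c : ℤ) * (A + B) * Rn * 2 ^ (t + n + 2) [ZMOD (2 : ℤ) ^ m] := hmid.symm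
    _ ≡ (A + B) * 5 ^ d [ZMOD (2 : ℤ) ^ m] := hR.symm
    _ ≡ (A + B) * 5 ^ e [ZMOD (2 : ℤ) ^ m] := Int.ModEq.mul_left _ h5ed.symm
end

section
/- Let m ≥ 3, χ₁, χ₂ multiplicative characters mod 2^m with χ₂ primitive, A = 2^n·A₁ (A₁ odd, n > 0), B odd, k = 2^t·k₁ (k₁ odd), and m − n = t + 2. Then Σ_{x=1}^{2^m} χ₁(x)·χ₂(A·x^k + B) equals 2^(m-1)·χ₂(A + B) if either (k is even and χ₁ is the principal character) or (k is odd and χ₁ = χ₄), and equals 0 otherwise. Here χ₄ is the mod 2^m character induced by the nontrivial character mod 4, i.e., χ₄(x) = ±1 according as x ≡ ±1 (mod 4). -/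
/-- The mod `2^m` character induced by the nontrivial character mod 4:
`χ₄ x = 1` if `x ≡ 1 (mod 4)`, `-1` if `x ≡ 3 (mod 4)`, and `0` on even residues. -/
noncomputable def chi4 (m : ℕ) (x : ZMod (2 ^ m)) : ℂ :=
  if x.val % 4 = 1 then 1 else if x.val % 4 = 3 then -1 else 0

lemma aux_isUnit_iff (m : ℕ) (hm : 1 ≤ m) (x : ZMod (2^m)) : IsUnit x ↔ x.val % 2 = 1 := by
  have h2 : (0:ℕ) < 2^m := pow_pos (by norm_num : (0:ℕ) < 2) m
  haveI : NeZero (2^m) := ⟨h2.ne'⟩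
  conv_lhs => rw [← ZMod.natCast_zmod_val x]
  rw [ZMod.isUnit_iff_coprime, Nat.coprime_pow_right_iff hm, Nat.coprime_two_right, Nat.odd_iff]

lemma aux_two_pow_dvd (y : ℤ) (hy : Odd y) (t : ℕ) (ht : 1 ≤ t) :
    (2:ℤ)^(t+2) ∣ y^(2^t) - 1 := by
  induction t with
  | zero => omega
  | succ t ih =>
    rcases Nat.eq_or_lt_of_le ht with h1 | h1
    · obtain rfl : t = 0 := by omega
      obtain ⟨c, rfl⟩ := hy
      obtain ⟨d, hd⟩ := Int.even_mul_succ_self c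
      norm_num
      have : (2*c+1)^2 - 1 = 8 * d := by
        have : c * (c+1) = 2 * d := by omega
        nlinarith [this]
      rw [this]
      exact ⟨d, rfl⟩
    · have ht' : 1 ≤ t := by omega
      have ih' := ih ht'
      have hodd : Odd (y ^ (2^t)) := hy.pow
      have heven : (2:ℤ) ∣ y^(2^t) + 1 := by
        obtain ⟨c, hc⟩ := hodd; exact ⟨c+1, by linarith⟩
      have hfac : y^(2^(t+1)) - 1 = (y^(2^t) - 1) * (y^(2^t) + 1) := by
        rw [pow_succ, pow_mul]; ring
      rw [hfac, pow_succ]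
      exact mul_dvd_mul ih' heven

noncomputable def psi4 (m : ℕ) (hm : 2 ≤ m) : DirichletCharacter ℂ (2^m) :=
  DirichletCharacter.changeLevel
    (by calc (4:ℕ) = 2^2 := by norm_num
             _ ∣ 2^m := pow_dvd_pow 2 hm)
    (ZMod.χ₄.ringHomComp (Int.castRingHom ℂ))

lemma psi4_apply (m : ℕ) (hm : 2 ≤ m) (x : ZMod (2^m)) : psi4 m hm x = chi4 m x := by
  have h2 : (0:ℕ) < 2^m := pow_pos (by norm_num : (0:ℕ) < 2) m
  haveI : NeZero (2^m) := ⟨h2.ne'⟩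
  by_cases hx : IsUnit x
  · lift x to (ZMod (2^m))ˣ using hx with u
    rw [psi4, DirichletCharacter.changeLevel_eq_cast_of_dvd]
    have hval : ((u : ZMod (2^m)).val) % 2 = 1 := (aux_isUnit_iff m (by omega) _).mp u.isUnit
    have hcast : (ZMod.cast ((u : ZMod (2^m))) : ZMod 4) = (((u:ZMod (2^m)).val : ℕ) : ZMod 4) := by
      rw [← ZMod.natCast_val]
    rw [hcast, MulChar.ringHomComp_apply]
    rcases Nat.even_or_odd ((u:ZMod (2^m)).val) with h | h
    · exact absurd (Nat.even_iff.mp h) (by omega)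
    · have h4 : (u:ZMod (2^m)).val % 4 = 1 ∨ (u:ZMod (2^m)).val % 4 = 3 := by
        have := Nat.odd_iff.mp h; omega
      rcases h4 with h4 | h4
      · rw [ZMod.χ₄_nat_one_mod_four h4, chi4, if_pos h4]; norm_num
      · rw [ZMod.χ₄_nat_three_mod_four h4, chi4]
        rw [if_neg (by omega), if_pos h4]; norm_num
  · rw [(psi4 m hm).map_nonunit hx, chi4]
    have hval : x.val % 2 = 0 := by
      rcases Nat.even_or_odd x.val with h | h
      · exact Nat.even_iff.mp h
      · exact absurd ((aux_isUnit_iff m (by omega) x).mpr (Nat.odd_iff.mp h)) hx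
    rw [if_neg (by omega), if_neg (by omega)]

lemma aux_two_pow_mul_odd (m : ℕ) (hm : 1 ≤ m) (v : ZMod (2^m)) (hv : v.val % 2 = 1) :
    (2:ZMod (2^m))^(m-1) * v = 2^(m-1) := by
  have h2 : (0:ℕ) < 2^m := pow_pos (by norm_num : (0:ℕ) < 2) m
  haveI : NeZero (2^m) := ⟨h2.ne'⟩
  conv_lhs => rw [← ZMod.natCast_zmod_val v]
  obtain ⟨c, hc⟩ := Nat.odd_iff.mpr hv
  rw [hc]
  push_cast
  have h0 : (2:ZMod (2^m)) * 2^(m-1) = 0 := by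
    have h1 : (2:ZMod (2^m)) * 2^(m-1) = (((2^m : ℕ) : ZMod (2^m))) := by
      push_cast
      rw [← pow_succ']
      congr 1
      omega
    rw [h1, ZMod.natCast_self]
  calc (2:ZMod (2^m))^(m-1) * (2 * c + 1)
      = (2 * 2^(m-1)) * c + 2^(m-1) := by ring
    _ = 2^(m-1) := by rw [h0]; ring

lemma aux_chi2_shift (m : ℕ) (hm : 3 ≤ m) (χ₂ : DirichletCharacter ℂ (2^m))
    (h₂ : χ₂.IsPrimitive) : χ₂ (1 + 2^(m-1)) = -1 := by
  have h2 : (0:ℕ) < 2^m := pow_pos (by norm_num : (0:ℕ) < 2) m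
  haveI : NeZero (2^m) := ⟨h2.ne'⟩
  have h1lt : (1:ℕ) < 2^(m-1) := by
    calc (1:ℕ) < 2^2 := by norm_num
      _ ≤ 2^(m-1) := Nat.pow_le_pow_right (by norm_num) (by omega)
  haveI : Fact ((1:ℕ) < 2^(m-1)) := ⟨h1lt⟩
  set u0 : ZMod (2^m) := 1 + 2^(m-1) with hu0
  have h2m : ((2:ZMod (2^m)))^m = 0 := by
    have : ((2:ZMod (2^m)))^m = (((2^m : ℕ)) : ZMod (2^m)) := by push_cast; ring
    rw [this, ZMod.natCast_self]
  have h2m1 : (2:ZMod (2^m)) * 2^(m-1) = 0 := by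
    rw [← pow_succ']
    have : m - 1 + 1 = m := by omega
    rw [this, h2m]
  have hx2 : ((2:ZMod (2^m))^(m-1))^2 = 0 := by
    rw [← pow_mul]
    have : (m-1) * 2 = m + (m - 2) := by omega
    rw [this, pow_add, h2m, zero_mul]
  have hsq : u0^2 = 1 := by
    have : u0^2 = 1 + (2 * 2^(m-1)) + (2^(m-1))^2 := by rw [hu0]; ring
    rw [this, h2m1, hx2]; ring
  have hval : χ₂ u0 ^ 2 = 1 := by
    rw [← map_pow, hsq, map_one]
  have hfac : (χ₂ u0 - 1) * (χ₂ u0 + 1) = 0 := by linear_combination hval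
  have hu0nat : u0 = ((1 + 2^(m-1) : ℕ) : ZMod (2^m)) := by push_cast; rfl
  rcases mul_eq_zero.mp hfac with h | h
  · exfalso
    have h1 : χ₂ u0 = 1 := sub_eq_zero.mp h
    have hdvd : (2:ℕ)^(m-1) ∣ 2^m := pow_dvd_pow 2 (by omega)
    have hft : χ₂.FactorsThrough (2^(m-1)) := by
      rw [DirichletCharacter.factorsThrough_iff_ker_unitsMap hdvd]
      intro w hw
      have hw' : ((ZMod.castHom hdvd (ZMod (2^(m-1)))) (w : ZMod (2^m))) = 1 := by
        have := congrArg (Units.val) hw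
        simpa [ZMod.unitsMap_def] using this
      have hv1 : (w : ZMod (2^m)).val % 2^(m-1) = 1 := by
        rw [ZMod.castHom_apply, ZMod.cast_eq_val] at hw'
        have := congrArg ZMod.val hw'
        rwa [ZMod.val_natCast, ZMod.val_one] at this
      have hvlt : (w : ZMod (2^m)).val < 2^m := ZMod.val_lt _
      have h2m' : (2:ℕ)^m = 2 * 2^(m-1) := by
        rw [← pow_succ']; congr 1; omega
      have hvlt2 : (w : ZMod (2^m)).val < 2 * 2^(m-1) := hvlt.trans_eq h2m'
      have hcases : (w : ZMod (2^m)).val = 1 ∨ (w : ZMod (2^m)).val = 1 + 2^(m-1) := by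
        have hgen : ∀ a P : ℕ, 0 < P → a % P = 1 → a < 2*P → a = 1 ∨ a = 1 + P := by
          intro a P hP ha1 ha2
          have hdm := Nat.div_add_mod a P
          have hq : a / P < 2 := Nat.div_lt_of_lt_mul (by linarith [ha2])
          obtain ⟨q, hqe⟩ : ∃ q, a / P = q := ⟨_, rfl⟩
          rw [hqe] at hq hdm
          rcases (by omega : q = 0 ∨ q = 1) with rfl | rfl <;> omega
        exact hgen _ _ (by positivity) hv1 hvlt2
      have hwe : (w : ZMod (2^m)) = 1 ∨ (w : ZMod (2^m)) = u0 := by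
        rcases hcases with hc | hc
        · left; rw [← ZMod.natCast_zmod_val (w : ZMod (2^m)), hc]; push_cast; ring
        · right; rw [← ZMod.natCast_zmod_val (w : ZMod (2^m)), hc, hu0nat]
      rw [MonoidHom.mem_ker]
      ext
      rw [MulChar.coe_toUnitHom, Units.val_one]
      rcases hwe with hwe | hwe
      · rw [hwe, map_one]
      · rw [hwe, h1]
    have hle : χ₂.conductor ≤ 2^(m-1) := Nat.sInf_le hft
    rw [h₂] at hle
    have hlt : (2:ℕ)^(m-1) < 2^m := Nat.pow_lt_pow_right (by norm_num) (by omega)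
    omega
  · linear_combination h

lemma aux_val_intCast_odd (m : ℕ) (hm : 1 ≤ m) (z : ℤ) (hz : Odd z) :
    ((z : ZMod (2^m))).val % 2 = 1 := by
  haveI : NeZero (2^m) := ⟨(pow_pos (by norm_num : (0:ℕ) < 2) m).ne'⟩
  have h1 : (((z : ZMod (2^m))).val : ℤ) = z % (2:ℤ)^m := by
    have := ZMod.val_intCast (n := 2^m) z
    push_cast at this
    exact this
  obtain ⟨c, hc⟩ := hz
  have h2 : (2:ℤ)^m = 2 * 2^(m-1) := by
    rw [← pow_succ']; congr 1; omega
  have h3 : z % (2:ℤ)^m = z - (2:ℤ)^m * (z / (2:ℤ)^m) := Int.emod_def _ _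
  set q := z / (2:ℤ)^m with hq
  have h4 : (2:ℤ)^m * q = 2 * (2^(m-1) * q) := by rw [h2]; ring
  have h5 : (((z : ZMod (2^m))).val : ℤ) = 2*c+1 - 2*(2^(m-1)*q) := by
    rw [h1, h3, h4, hc]
  omega

lemma aux_final_sum (m : ℕ) (hm : 1 ≤ m) (χ : DirichletCharacter ℂ (2^m)) :
    ∑ x : ZMod (2^m), χ x = if χ = 1 then ((2:ℂ)^(m-1)) else 0 := by
  haveI : NeZero (2^m) := ⟨(pow_pos (by norm_num : (0:ℕ) < 2) m).ne'⟩
  by_cases h : χ = 1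
  · rw [if_pos h, h, MulChar.sum_one_eq_card_units, ZMod.card_units_eq_totient,
      Nat.totient_prime_pow Nat.prime_two hm]
    push_cast; ring
  · rw [if_neg h]; exact MulChar.sum_eq_zero_of_ne_one h


theorem stmt_12 (m n t : ℕ) (hm : 3 ≤ m) (hn : 0 < n)
    (χ₁ χ₂ : DirichletCharacter ℂ (2 ^ m)) (h₂ : χ₂.IsPrimitive)
    (A A₁ B : ℤ) (k k₁ : ℕ)
    (hA : A = 2 ^ n * A₁) (hA₁ : Odd A₁) (hB : Odd B)
    (hk : k = 2 ^ t * k₁) (hk₁ : Odd k₁)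
    (hmn : m - n = t + 2) (hnm : n < m) :
    ∑ x : ZMod (2 ^ m), χ₁ x * χ₂ ((A : ZMod (2 ^ m)) * x ^ k + B) =
      if (Even k ∧ χ₁ = 1) ∨ (Odd k ∧ ∀ x, χ₁ x = chi4 m x) then
        2 ^ (m - 1) * χ₂ ((A : ZMod (2 ^ m)) + B)
      else 0 := by
  haveI : NeZero (2^m) := ⟨(pow_pos (by norm_num : (0:ℕ) < 2) m).ne'⟩
  have hmeq : m = n + t + 2 := by omega
  rcases Nat.eq_zero_or_pos t with ht0 | ht1
  · -- t = 0 : k odd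
    subst ht0
    have hkk : k = k₁ := by simpa using hk
    have hkodd : Odd k := hkk ▸ hk₁
    have hnoteven : ¬ Even k := (Nat.not_even_iff_odd.mpr hkodd)
    have hmn2 : m = n + 2 := by omega
    have hm2 : 2 ≤ m := by omega
    have hψval : ∀ a : (ZMod (2^m))ˣ, psi4 m hm2 (a : ZMod (2^m)) = 1 ∨
        psi4 m hm2 (a : ZMod (2^m)) = -1 := by
      intro a
      have hodd : (a : ZMod (2^m)).val % 2 = 1 := (aux_isUnit_iff m (by omega) _).mp a.isUnit
      rw [psi4_apply, chi4]
      rcases (by omega : (a:ZMod (2^m)).val % 4 = 1 ∨ (a:ZMod (2^m)).val % 4 = 3) with h | h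
      · left; rw [if_pos h]
      · right; rw [if_neg (by omega), if_pos h]
    have hψsq : psi4 m hm2 * psi4 m hm2 = 1 := by
      apply MulChar.eq_one_iff.mpr
      intro a
      rw [MulChar.mul_apply]
      rcases hψval a with h | h <;> rw [h] <;> norm_num
    have hiff2 : (∀ x, χ₁ x = chi4 m x) ↔ χ₁ * psi4 m hm2 = 1 := by
      constructor
      · intro h
        have hχeq : χ₁ = psi4 m hm2 := MulChar.ext (fun a => by rw [h, psi4_apply])
        rw [hχeq]; exact hψsq
      · intro h x
        by_cases hx : IsUnit x
        · lift x to (ZMod (2^m))ˣ using hx with a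
          have h1 : (χ₁ * psi4 m hm2) (a : ZMod (2^m)) = 1 := by
            rw [h]; exact MulChar.one_apply_coe a
          rw [MulChar.mul_apply] at h1
          rw [← psi4_apply m hm2]
          rcases hψval a with hε | hε <;> rw [hε] at h1 ⊢
          · rw [mul_one] at h1; exact h1
          · linear_combination -h1
        · rw [χ₁.map_nonunit hx, ← psi4_apply m hm2, (psi4 m hm2).map_nonunit hx]
    have hcond : ((Even k ∧ χ₁ = 1) ∨ (Odd k ∧ ∀ x, χ₁ x = chi4 m x)) ↔
        χ₁ * psi4 m hm2 = 1 := by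
      constructor
      · rintro (⟨he, _⟩ | ⟨_, h⟩)
        · exact absurd he hnoteven
        · exact hiff2.mp h
      · intro h; exact Or.inr ⟨hkodd, hiff2.mpr h⟩
    have hterm : ∀ x : ZMod (2^m), χ₁ x * χ₂ ((A : ZMod (2 ^ m)) * x ^ k + B) =
        (χ₁ * psi4 m hm2) x * χ₂ ((A : ZMod (2 ^ m)) + B) := by
      intro x
      rw [MulChar.mul_apply]
      by_cases hx : IsUnit x
      · have hodd : x.val % 2 = 1 := (aux_isUnit_iff m (by omega) x).mp hx
        have hxv : x = ((x.val : ℕ) : ZMod (2^m)) := (ZMod.natCast_zmod_val x).symm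
        rcases (by omega : x.val % 4 = 1 ∨ x.val % 4 = 3) with h4 | h4
        · -- x ≡ 1 mod 4
          have hψx : psi4 m hm2 x = 1 := by rw [psi4_apply, chi4, if_pos h4]
          have h41 : (4:ℤ) ∣ (x.val:ℤ) - 1 := by omega
          have hd2 : (x.val:ℤ) - 1 ∣ (x.val:ℤ)^k - 1 := by
            simpa using sub_dvd_pow_sub_pow ((x.val:ℤ)) 1 k
          have h3 : (2:ℤ)^m ∣ A * ((x.val:ℤ)^k - 1) := by
            have hms : (2:ℤ)^m = 2^n * 4 := by rw [hmn2, pow_add]; norm_num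
            rw [hms, hA, mul_assoc]
            exact mul_dvd_mul_left _ ((h41.trans hd2).mul_left A₁)
          have hz : ((A * ((x.val:ℤ)^k - 1) : ℤ) : ZMod (2^m)) = 0 := by
            rw [ZMod.intCast_zmod_eq_zero_iff_dvd]
            exact_mod_cast h3
          have hkey : (A : ZMod (2^m)) * x ^ k = (A : ZMod (2^m)) := by
            have h6 : (A : ZMod (2^m)) * x ^ k - A
                = ((A * ((x.val:ℤ)^k - 1) : ℤ) : ZMod (2^m)) := by
              conv_lhs => rw [hxv]
              push_cast
              ring
            rw [hz] at h6
            exact sub_eq_zero.mp h6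
          rw [hkey, hψx, mul_one]
        · -- x ≡ 3 mod 4
          have hψx : psi4 m hm2 x = -1 := by
            rw [psi4_apply, chi4, if_neg (by omega), if_pos h4]
          have h41 : (4:ℤ) ∣ (x.val:ℤ) + 1 := by omega
          have hd2 : (x.val:ℤ) + 1 ∣ (x.val:ℤ)^k + 1 := by
            simpa using hkodd.add_dvd_pow_add_pow ((x.val:ℤ)) 1
          have h3 : (2:ℤ)^m ∣ A * ((x.val:ℤ)^k + 1) := by
            have hms : (2:ℤ)^m = 2^n * 4 := by rw [hmn2, pow_add]; norm_num
            rw [hms, hA, mul_assoc]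
            exact mul_dvd_mul_left _ ((h41.trans hd2).mul_left A₁)
          have hz : ((A * ((x.val:ℤ)^k + 1) : ℤ) : ZMod (2^m)) = 0 := by
            rw [ZMod.intCast_zmod_eq_zero_iff_dvd]
            exact_mod_cast h3
          have hkey : (A : ZMod (2^m)) * x ^ k = -(A : ZMod (2^m)) := by
            have h6 : (A : ZMod (2^m)) * x ^ k - (-(A : ZMod (2^m)))
                = ((A * ((x.val:ℤ)^k + 1) : ℤ) : ZMod (2^m)) := by
              conv_lhs => rw [hxv]
              push_cast
              ring
            rw [hz] at h6
            exact sub_eq_zero.mp h6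
          -- shift identity
          have hABodd : Odd (A + B) := by
            rw [hA]
            have hev : Even ((2:ℤ)^n * A₁) :=
              (Int.even_pow.mpr ⟨even_two, by omega⟩).mul_right A₁
            exact hev.add_odd hB
          have harg : ((A + B : ℤ) : ZMod (2^m)) = (A : ZMod (2^m)) + B := by
            push_cast; ring
          have hvodd : (((A + B : ℤ)) : ZMod (2^m)).val % 2 = 1 :=
            aux_val_intCast_odd m (by omega) _ hABodd
          have hP : (2:ZMod (2^m))^(m-1) * (((A + B : ℤ)) : ZMod (2^m)) = 2^(m-1) :=
            aux_two_pow_mul_odd m (by omega) _ hvodd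
          rw [harg] at hP
          have hzero : ((2*A + 2^(m-1) : ℤ) : ZMod (2^m)) = 0 := by
            rw [ZMod.intCast_zmod_eq_zero_iff_dvd]
            obtain ⟨c, hc⟩ := hA₁
            have he : 2*A + 2^(m-1) = 2^m * (c + 1) := by
              rw [hA, hc, hmn2]
              have e1 : n + 2 - 1 = n + 1 := by omega
              rw [e1]
              ring
            rw [he]
            exact ⟨c+1, by push_cast; ring⟩
          have hshift : ((B - A : ℤ) : ZMod (2^m))
              = ((A : ZMod (2^m)) + B) * (1 + 2^(m-1)) := by
            have h7 : ((B - A : ℤ) : ZMod (2^m))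
                - (((A : ZMod (2^m)) + B) + 2^(m-1))
                = -(((2*A + 2^(m-1) : ℤ) : ZMod (2^m))) := by
              push_cast
              ring
            have h8 : ((A : ZMod (2^m)) + B) * (1 + 2^(m-1))
                = ((A : ZMod (2^m)) + B) + 2^(m-1) := by
              have he2 : ((A : ZMod (2^m)) + B) * (1 + 2^(m-1))
                  = ((A : ZMod (2^m)) + B) + 2^(m-1) * ((A : ZMod (2^m)) + B) := by
                ring
              rw [he2, hP]
            rw [h8]
            have h9 : ((B - A : ℤ) : ZMod (2^m))
                - (((A : ZMod (2^m)) + B) + 2^(m-1)) = 0 := by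
              rw [h7, hzero, neg_zero]
            exact sub_eq_zero.mp h9
          have hval2 : χ₂ ((A : ZMod (2^m)) * x ^ k + B)
              = χ₂ ((A : ZMod (2^m)) + B) * (-1) := by
            have hBA : (A : ZMod (2^m)) * x ^ k + B = ((B - A : ℤ) : ZMod (2^m)) := by
              rw [hkey]; push_cast; ring
            rw [hBA, hshift, map_mul, aux_chi2_shift m hm χ₂ h₂]
          rw [hval2, hψx]
          ring
      · rw [χ₁.map_nonunit hx, zero_mul, zero_mul, zero_mul]
    have hsum : (∑ x : ZMod (2^m), χ₁ x * χ₂ ((A : ZMod (2 ^ m)) * x ^ k + B))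
        = (∑ x : ZMod (2^m), (χ₁ * psi4 m hm2) x) * χ₂ ((A : ZMod (2 ^ m)) + B) := by
      rw [Finset.sum_mul]
      exact Finset.sum_congr rfl (fun x _ => hterm x)
    rw [hsum, aux_final_sum m (by omega) _]
    by_cases hc : χ₁ * psi4 m hm2 = 1
    · rw [if_pos hc, if_pos (hcond.mpr hc)]
    · rw [if_neg hc, if_neg (fun hh => hc (hcond.mp hh)), zero_mul]
  · -- t ≥ 1 : k even
    have hkeven : Even k := by
      rw [hk]
      exact (Nat.even_pow.mpr ⟨even_two, by omega⟩).mul_right k₁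
    have hcond : ((Even k ∧ χ₁ = 1) ∨ (Odd k ∧ ∀ x, χ₁ x = chi4 m x)) ↔ χ₁ = 1 := by
      constructor
      · rintro (⟨_, h⟩ | ⟨h, _⟩)
        · exact h
        · exact absurd h (Nat.not_odd_iff_even.mpr hkeven)
      · intro h; exact Or.inl ⟨hkeven, h⟩
    have hterm : ∀ x : ZMod (2^m), χ₁ x * χ₂ ((A : ZMod (2 ^ m)) * x ^ k + B) =
        χ₁ x * χ₂ ((A : ZMod (2 ^ m)) + B) := by
      intro x
      by_cases hx : IsUnit x
      · have hodd : x.val % 2 = 1 := (aux_isUnit_iff m (by omega) x).mp hx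
        have hxv : x = ((x.val : ℕ) : ZMod (2^m)) := (ZMod.natCast_zmod_val x).symm
        have hyodd : Odd ((x.val : ℤ)) := (Int.odd_coe_nat _).mpr (Nat.odd_iff.mpr hodd)
        have h1 : (2:ℤ)^(t+2) ∣ (x.val:ℤ)^(2^t) - 1 := aux_two_pow_dvd _ hyodd t ht1
        have hd2 : (x.val:ℤ)^(2^t) - 1 ∣ (x.val:ℤ)^k - 1 := by
          rw [hk, pow_mul]
          simpa using sub_dvd_pow_sub_pow ((x.val:ℤ)^(2^t)) 1 k₁
        have h3 : (2:ℤ)^m ∣ A * ((x.val:ℤ)^k - 1) := by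
          have hms : (2:ℤ)^m = 2^n * 2^(t+2) := by
            rw [hmeq]; ring
          rw [hms, hA, mul_assoc]
          exact mul_dvd_mul_left _ ((h1.trans hd2).mul_left A₁)
        have hz : ((A * ((x.val:ℤ)^k - 1) : ℤ) : ZMod (2^m)) = 0 := by
          rw [ZMod.intCast_zmod_eq_zero_iff_dvd]
          exact_mod_cast h3
        have hkey : (A : ZMod (2^m)) * x ^ k = (A : ZMod (2^m)) := by
          have h6 : (A : ZMod (2^m)) * x ^ k - A
              = ((A * ((x.val:ℤ)^k - 1) : ℤ) : ZMod (2^m)) := by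
            conv_lhs => rw [hxv]
            push_cast
            ring
          rw [hz] at h6
          exact sub_eq_zero.mp h6
        rw [hkey]
      · rw [χ₁.map_nonunit hx, zero_mul, zero_mul]
    have hsum : (∑ x : ZMod (2^m), χ₁ x * χ₂ ((A : ZMod (2 ^ m)) * x ^ k + B))
        = (∑ x : ZMod (2^m), χ₁ x) * χ₂ ((A : ZMod (2 ^ m)) + B) := by
      rw [Finset.sum_mul]
      exact Finset.sum_congr rfl (fun x _ => hterm x)
    rw [hsum, aux_final_sum m (by omega) χ₁]
    by_cases hc : χ₁ = 1
    · rw [if_pos hc, if_pos (hcond.mpr hc)]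
    · rw [if_neg hc, if_neg (fun hh => hc (hcond.mp hh)), zero_mul]
end
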